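/- Let (Ω, 𝓕, P) be a probability space and let X, Y : Ω → ℝ be random variables that are almost surely positive, such that X, Y, 1/Y, 1/(X+Y), log₂(Y), log₂(X+Y), and log₂(1 + X/Y) are all integrable. Then |E[log₂(1 + X/Y)] − log₂(1 + E[X]/E[Y])| ≤ log₂( E[X+Y] · E[1/(X+Y)] · E[Y] · E[1/Y] ). -/

import Mathlib

open MeasureTheory ProbabilityTheory

lemma aux_integral_pos {Ω : Type*} [MeasureSpace Ω] [IsProbabilityMeasure (ℙ : Measure Ω)]
    {f : Ω → ℝ} (hf : Integrable f) (hpos : ∀ᵐ ω ∂ℙ, 0 < f ω) :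
    0 < ∫ ω, f ω := by
  rw [integral_pos_iff_support_of_nonneg_ae (hpos.mono fun ω h => h.le) hf]
  have hc : (ℙ : Measure Ω) (Function.support f)ᶜ = 0 := by
    refine measure_mono_null (fun ω hω => ?_) (ae_iff.mp hpos)
    simp only [Function.mem_support, Set.mem_compl_iff, not_not] at hω
    simp [hω]
  have : (1 : ENNReal) ≤ ℙ (Function.support f) + ℙ (Function.support f)ᶜ := by
    rw [← measure_univ (μ := (ℙ : Measure Ω))]
    exact (measure_mono (by simp [Set.union_compl_self] : Set.univ ⊆ _)).trans
      (measure_union_le _ _)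
  rw [hc, add_zero] at this
  exact lt_of_lt_of_le (by norm_num) this

lemma aux_jensen_log {Ω : Type*} [MeasureSpace Ω] [IsProbabilityMeasure (ℙ : Measure Ω)]
    {f : Ω → ℝ} (hf : Integrable f) (hpos : ∀ᵐ ω ∂ℙ, 0 < f ω)
    (hlog : Integrable (fun ω => Real.log (f ω))) :
    (∫ ω, Real.log (f ω)) ≤ Real.log (∫ ω, f ω) := by
  set c := ∫ ω, f ω with hc
  have hcpos : 0 < c := aux_integral_pos hf hpos
  have hmono : ∀ᵐ ω ∂ℙ, Real.log (f ω) ≤ Real.log c + (f ω - c) / c := by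
    filter_upwards [hpos] with ω hω
    have h := Real.log_le_sub_one_of_pos (div_pos hω hcpos)
    rw [Real.log_div hω.ne' hcpos.ne'] at h
    have : (f ω - c) / c = f ω / c - 1 := by field_simp
    linarith
  have hint3 : Integrable (fun ω => (f ω - c) / c) := (hf.sub (integrable_const c)).div_const c
  have hint2 : Integrable (fun ω => Real.log c + (f ω - c) / c) :=
    (integrable_const _).add hint3
  calc (∫ ω, Real.log (f ω)) ≤ ∫ ω, (Real.log c + (f ω - c) / c) :=
        integral_mono_ae hlog hint2 hmono
    _ = Real.log c := by
        rw [integral_add (integrable_const _) hint3,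
          integral_const, integral_div, integral_sub hf (integrable_const c), integral_const]
        simp [hc]

/-- Jensen-type bound on the error of approximating `E[log₂(1 + X/Y)]` by
`log₂(1 + E[X]/E[Y])` for almost surely positive random variables `X`, `Y`. -/
theorem rate_approximation_error_bound
    {Ω : Type*} [MeasureSpace Ω] [IsProbabilityMeasure (ℙ : Measure Ω)]
    (X Y : Ω → ℝ)
    (hXpos : ∀ᵐ ω ∂ℙ, 0 < X ω) (hYpos : ∀ᵐ ω ∂ℙ, 0 < Y ω)
    (hX : Integrable X) (hY : Integrable Y)
    (hinvY : Integrable (fun ω => 1 / Y ω))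
    (hinvXY : Integrable (fun ω => 1 / (X ω + Y ω)))
    (hlogY : Integrable (fun ω => Real.logb 2 (Y ω)))
    (hlogXY : Integrable (fun ω => Real.logb 2 (X ω + Y ω)))
    (hlogR : Integrable (fun ω => Real.logb 2 (1 + X ω / Y ω))) :
    |(∫ ω, Real.logb 2 (1 + X ω / Y ω)) -
        Real.logb 2 (1 + (∫ ω, X ω) / (∫ ω, Y ω))| ≤
      Real.logb 2 ((∫ ω, (X ω + Y ω)) * (∫ ω, 1 / (X ω + Y ω)) *
        (∫ ω, Y ω) * (∫ ω, 1 / Y ω)) := by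
  have h2 : (0:ℝ) < Real.log 2 := Real.log_pos (by norm_num)
  have hSpos : ∀ᵐ ω ∂ℙ, 0 < X ω + Y ω := by
    filter_upwards [hXpos, hYpos] with ω h1 h2; linarith
  have hS : Integrable (fun ω => X ω + Y ω) := hX.add hY
  -- integrability of natural logs
  have hlogY' : Integrable (fun ω => Real.log (Y ω)) := by
    have : (fun ω => Real.log (Y ω)) = fun ω => Real.logb 2 (Y ω) * Real.log 2 := by
      funext ω; rw [Real.logb, div_mul_cancel₀ _ h2.ne']
    rw [this]; exact hlogY.mul_const _
  have hlogS' : Integrable (fun ω => Real.log (X ω + Y ω)) := by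
    have : (fun ω => Real.log (X ω + Y ω)) = fun ω => Real.logb 2 (X ω + Y ω) * Real.log 2 := by
      funext ω; rw [Real.logb, div_mul_cancel₀ _ h2.ne']
    rw [this]; exact hlogXY.mul_const _
  have hloginvY : Integrable (fun ω => Real.log (1 / Y ω)) := by
    have : (fun ω => Real.log (1 / Y ω)) = fun ω => -Real.log (Y ω) := by
      funext ω; rw [one_div, Real.log_inv]
    rw [this]; exact hlogY'.neg
  have hloginvS : Integrable (fun ω => Real.log (1 / (X ω + Y ω))) := by
    have : (fun ω => Real.log (1 / (X ω + Y ω))) = fun ω => -Real.log (X ω + Y ω) := by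
      funext ω; rw [one_div, Real.log_inv]
    rw [this]; exact hlogS'.neg
  -- positivity of the integrals
  have ha : 0 < ∫ ω, X ω := aux_integral_pos hX hXpos
  have hb : 0 < ∫ ω, Y ω := aux_integral_pos hY hYpos
  have hs : 0 < ∫ ω, (X ω + Y ω) := aux_integral_pos hS hSpos
  have hu : 0 < ∫ ω, 1 / (X ω + Y ω) :=
    aux_integral_pos hinvXY (hSpos.mono fun ω h => by positivity)
  have hv : 0 < ∫ ω, 1 / Y ω :=
    aux_integral_pos hinvY (hYpos.mono fun ω h => by positivity)
  set a := ∫ ω, X ω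
  set b := ∫ ω, Y ω
  set s := ∫ ω, (X ω + Y ω) with hsdef
  set u := ∫ ω, 1 / (X ω + Y ω)
  set v := ∫ ω, 1 / Y ω
  have hsab : s = a + b := integral_add hX hY
  set L1 := ∫ ω, Real.log (X ω + Y ω) with hL1
  set L2 := ∫ ω, Real.log (Y ω) with hL2
  -- Jensen inequalities
  have j1 : L1 ≤ Real.log s := aux_jensen_log hS hSpos hlogS'
  have j2 : L2 ≤ Real.log b := aux_jensen_log hY hYpos hlogY'
  have j3 : -L1 ≤ Real.log u := by
    have := aux_jensen_log hinvXY (hSpos.mono fun ω h => by positivity) hloginvS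
    have heq : (∫ ω, Real.log (1 / (X ω + Y ω))) = -L1 := by
      rw [hL1, ← integral_neg]
      exact integral_congr_ae (Filter.Eventually.of_forall fun ω => by
        simp [Real.log_inv])
    linarith [heq ▸ this]
  have j4 : -L2 ≤ Real.log v := by
    have := aux_jensen_log hinvY (hYpos.mono fun ω h => by positivity) hloginvY
    have heq : (∫ ω, Real.log (1 / Y ω)) = -L2 := by
      rw [hL2, ← integral_neg]
      exact integral_congr_ae (Filter.Eventually.of_forall fun ω => by
        simp [Real.log_inv])
    linarith [heq ▸ this]
  -- rewrite the LHS integral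
  have hIeq : (∫ ω, Real.logb 2 (1 + X ω / Y ω)) = (L1 - L2) / Real.log 2 := by
    have : (∫ ω, Real.logb 2 (1 + X ω / Y ω))
        = ∫ ω, (Real.log (X ω + Y ω) - Real.log (Y ω)) / Real.log 2 := by
      refine integral_congr_ae ?_
      filter_upwards [hXpos, hYpos] with ω hx hy
      have h1 : 1 + X ω / Y ω = (X ω + Y ω) / Y ω := by rw [eq_div_iff hy.ne']; field_simp; ring
      rw [h1, Real.logb, Real.log_div (by linarith) hy.ne']
    rw [this, integral_div, integral_sub hlogS' hlogY']
  have hlogb2 : Real.logb 2 (1 + a / b) = (Real.log s - Real.log b) / Real.log 2 := by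
    have h1 : 1 + a / b = s / b := by rw [hsab, eq_div_iff hb.ne']; field_simp; ring
    rw [h1, Real.logb, Real.log_div (by rw [hsab]; linarith) hb.ne']
  have hrhs : Real.logb 2 (s * u * b * v)
      = (Real.log s + Real.log u + Real.log b + Real.log v) / Real.log 2 := by
    rw [Real.logb, Real.log_mul (by positivity) hv.ne', Real.log_mul (by positivity) hb.ne',
      Real.log_mul hs.ne' hu.ne']
  rw [hIeq, hlogb2, hrhs, div_sub_div_same, abs_div, abs_of_pos h2]
  have hcore : |(L1 - L2) - (Real.log s - Real.log b)|
      ≤ Real.log s + Real.log u + Real.log b + Real.log v := by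
    rw [abs_le]; constructor <;> linarith
  gcongr
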